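/- Let p > 2 be a prime and n ≥ 1 an integer with n+1 ≡ p−1 (mod p), let d ≥ 0 be the largest integer such that p^{d+1} divides n+2, and write n+1 = a_j p^j + ... + a_0 in base p (so a_i = p−1 for 0 ≤ i ≤ d, and if d < j then a_{d+1} ≠ p−1). Then, as multisets of positive integers, ext(n) = supp(n+1) + supp(n−1) + Σ_{i=1}^{d} supp(n+1−2p^i) + E, where: (a) E = ∅ if n+2 = p^{d+1}; (b) E = supp(n+1−2p^{d+1}) if n+2 = a·p^{d+1} for some integer a with 2 ≤ a ≤ p−1; (c) otherwise (when n+2 ≥ p^{d+2}), E = ∅ if a_{d+1} = 0, E = supp(n+1−2p^{d+1}) + supp(n+1−2p^{d+1}) (two copies) if a_{d+1} = 1, and E = supp(n+1−2p^{d+1}) if 2 ≤ a_{d+1} ≤ p−2. (Here supp(−1) = ∅, which occurs in case (b) exactly when n+1 = 2p^{d+1}−1.) -/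

import Mathlib

/-- `suppP p n` : for `n ≥ 0`, writing `n+1` in base `p` as
`a_j p^j + ... + a_0`, the set of integers
`a_j p^j ± a_{j-1} p^{j-1} ± ... ± a_0` over all choices of signs on the
lower digits.  By convention `suppP p (-1) = ∅` (and also for `n < 0`). -/
def suppP (p : ℕ) (n : ℤ) : Finset ℤ :=
  if 0 ≤ n then
    let L := Nat.digits p (n.toNat + 1)
    let j := L.length - 1
    Finset.image
      (fun ε : Fin j → Bool =>
        (L.getD j 0 : ℤ) * (p : ℤ) ^ j +
          ∑ i : Fin j, (if ε i then (1 : ℤ) else -1) * (L.getD i 0 : ℤ) * (p : ℤ) ^ (i : ℕ))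
      Finset.univ
  else ∅

/-- `extP p n` : the multiset consisting of `x+1` for each `x ∈ suppP p n`,
together with `x-1` for each `x ∈ suppP p n` with `x ≥ 2` (occurrences of `0`
are discarded). -/
def extP (p : ℕ) (n : ℤ) : Multiset ℤ :=
  (suppP p n).val.map (fun x => x + 1) +
    ((suppP p n).val.filter (fun x => 2 ≤ x)).map (fun x => x - 1)


namespace ExtAux

/-- signed digit sums of a little-endian digit list, top digit positive -/
def M (p : ℕ) : List ℕ → Multiset ℤ
  | [] => 0
  | a :: L =>
    if L = [] then {(a : ℤ)}
    else if a = 0 then (M p L).map (fun z => (p : ℤ) * z)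
    else (M p L).bind (fun z => {(p : ℤ) * z - (a : ℤ), (p : ℤ) * z + (a : ℤ)})

def TM (p m : ℕ) : Multiset ℤ := M p (Nat.digits p m)

def EM (p m : ℕ) : Multiset ℤ :=
  (TM p m).map (fun x => x + 1) + ((TM p m).filter (fun x => 2 ≤ x)).map (fun x => x - 1)

@[simp] lemma M_nil (p : ℕ) : M p [] = 0 := rfl

@[simp] lemma M_single (p a : ℕ) : M p [a] = {(a : ℤ)} := rfl

lemma M_cons (p a : ℕ) {L : List ℕ} (hL : L ≠ []) :
    M p (a :: L) =
      if a = 0 then (M p L).map (fun z => (p : ℤ) * z)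
      else (M p L).bind (fun z => {(p : ℤ) * z - (a : ℤ), (p : ℤ) * z + (a : ℤ)}) := by
  rw [M, if_neg hL]

@[simp] lemma TM_zero (p : ℕ) : TM p 0 = 0 := by simp [TM]

lemma TM_lt (p m : ℕ) (hp : 1 < p) (h0 : 0 < m) (h : m < p) : TM p m = {(m : ℤ)} := by
  unfold TM
  rw [Nat.digits_def' hp h0, Nat.mod_eq_of_lt h, Nat.div_eq_of_lt h]
  simp

lemma TM_rec (p b q : ℕ) (hp : 1 < p) (hq : q ≠ 0) (hb : b < p) :
    TM p (b + p * q) =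
      if b = 0 then (TM p q).map (fun z => (p : ℤ) * z)
      else (TM p q).bind (fun z => {(p : ℤ) * z - (b : ℤ), (p : ℤ) * z + (b : ℤ)}) := by
  have h0 : 0 < b + p * q := by positivity
  have hdig : Nat.digits p (b + p * q) = b :: Nat.digits p q := by
    rw [Nat.digits_def' hp h0]
    congr 1
    · rw [Nat.add_mul_mod_self_left, Nat.mod_eq_of_lt hb]
    · congr 1
      rw [Nat.add_mul_div_left _ _ (by omega : 0 < p), Nat.div_eq_of_lt hb, Nat.zero_add]
  rw [TM, hdig, M_cons p b (Nat.digits_ne_nil_iff_ne_zero.mpr hq)]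
  rfl

lemma TM_mul (p q : ℕ) (hp : 1 < p) : TM p (p * q) = (TM p q).map (fun z => (p : ℤ) * z) := by
  rcases Nat.eq_zero_or_pos q with rfl | hq
  · simp
  · have := TM_rec p 0 q hp (by omega) (by omega)
    simpa using this

lemma TM_pos (p : ℕ) (hp : 2 ≤ p) : ∀ m, ∀ x ∈ TM p m, 1 ≤ x := by
  intro m
  induction m using Nat.strong_induction_on with
  | _ m ih =>
    rcases Nat.eq_zero_or_pos m with rfl | h0
    · simp
    rcases lt_or_ge m p with hlt | hge
    · rw [TM_lt p m hp h0 hlt]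
      intro x hx
      rw [Multiset.mem_singleton] at hx
      subst hx; exact_mod_cast h0
    · have hq : m / p ≠ 0 := by
        have := Nat.div_pos hge (by omega)
        omega
      have hqlt : m / p < m := Nat.div_lt_self h0 (by omega)
      have hrec := TM_rec p (m % p) (m / p) hp hq (Nat.mod_lt _ (by omega))
      rw [Nat.mod_add_div] at hrec
      rw [hrec]
      split_ifs with hb
      · intro x hx
        rw [Multiset.mem_map] at hx
        obtain ⟨z, hz, rfl⟩ := hx
        have h1 := ih _ hqlt z hz
        nlinarith [(by exact_mod_cast hp : (2:ℤ) ≤ (p:ℤ))]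
      · intro x hx
        rw [Multiset.mem_bind] at hx
        obtain ⟨z, hz, hx⟩ := hx
        have h1 := ih _ hqlt z hz
        have hbp : ((m % p : ℕ) : ℤ) < (p : ℤ) := by exact_mod_cast Nat.mod_lt m (by omega : 0 < p)
        have hb0 : (0:ℤ) ≤ ((m % p : ℕ) : ℤ) := Int.natCast_nonneg _
        simp only [Multiset.insert_eq_cons, Multiset.mem_cons, Multiset.mem_singleton] at hx
        have hP : (2:ℤ) ≤ (p:ℤ) := by exact_mod_cast hp
        rcases hx with rfl | rfl
        · nlinarith
        · nlinarith

lemma not_dvd_two_mul (p b : ℕ) (hp : p.Prime) (hp2 : 2 < p) (hb0 : b ≠ 0) (hb : b < p) :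
    ¬ ((p:ℤ) ∣ 2 * (b:ℤ)) := by
  intro h
  have h' : (p:ℤ) ∣ ((2*b : ℕ) : ℤ) := by push_cast; exact h
  rw [Int.natCast_dvd_natCast] at h'
  rcases (Nat.Prime.dvd_mul hp).mp h' with h2 | h2
  · exact absurd (Nat.le_of_dvd (by omega) h2) (by omega)
  · exact absurd (Nat.le_of_dvd (by omega) h2) (by omega)

lemma TM_nodup (p : ℕ) (hp : p.Prime) (hp2 : 2 < p) : ∀ m, (TM p m).Nodup := by
  intro m
  induction m using Nat.strong_induction_on with
  | _ m ih =>
    rcases Nat.eq_zero_or_pos m with rfl | h0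
    · simp
    rcases lt_or_ge m p with hlt | hge
    · rw [TM_lt p m hp.one_lt h0 hlt]; exact Multiset.nodup_singleton _
    · have hq : m / p ≠ 0 := by have := Nat.div_pos hge (by omega); omega
      have hqlt : m / p < m := Nat.div_lt_self h0 (by omega)
      have hrec := TM_rec p (m % p) (m / p) hp.one_lt hq (Nat.mod_lt _ (by omega))
      rw [Nat.mod_add_div] at hrec
      rw [hrec]
      have hnd := ih _ hqlt
      have hpne : (p:ℤ) ≠ 0 := by exact_mod_cast (by omega : p ≠ 0)
      split_ifs with hb
      · exact hnd.map (fun x y h => mul_left_cancel₀ hpne h)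
      · have hbz : ((m % p : ℕ) : ℤ) ≠ 0 := by exact_mod_cast hb
        have hndvd := not_dvd_two_mul p (m % p) hp hp2 hb (Nat.mod_lt _ (by omega))
        rw [Multiset.nodup_bind]
        constructor
        · intro z hz
          simp only [Multiset.insert_eq_cons]
          refine Multiset.nodup_cons.mpr ⟨?_, Multiset.nodup_singleton _⟩
          rw [Multiset.mem_singleton]
          intro hE
          apply hbz; linarith
        · apply Multiset.Nodup.pairwise _ hnd
          intro z hz z' hz' hne
          have : Disjoint ({(p:ℤ) * z - (m % p : ℕ), (p:ℤ) * z + (m % p : ℕ)} : Multiset ℤ)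
              {(p:ℤ) * z' - (m % p : ℕ), (p:ℤ) * z' + (m % p : ℕ)} := by
            rw [Multiset.disjoint_left]
            intro a ha ha'
            simp only [Multiset.insert_eq_cons, Multiset.mem_cons, Multiset.mem_singleton] at ha ha'
            rcases ha with rfl | rfl <;> rcases ha' with h' | h'
            · exact hne (mul_left_cancel₀ hpne (by linarith))
            · exact hndvd ⟨z - z', by linarith⟩
            · exact hndvd ⟨z' - z, by linarith⟩
            · exact hne (mul_left_cancel₀ hpne (by linarith))
          exact this

/-- the value map in the definition of `suppP` -/
def V (p : ℕ) (L : List ℕ) (ε : Fin (L.length - 1) → Bool) : ℤ :=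
  (L.getD (L.length - 1) 0 : ℤ) * (p : ℤ) ^ (L.length - 1) +
    ∑ i : Fin (L.length - 1),
      (if ε i then (1 : ℤ) else -1) * (L.getD (i : ℕ) 0 : ℤ) * (p : ℤ) ^ (i : ℕ)

lemma V_single (p a : ℕ) (ε : Fin 0 → Bool) : V p [a] ε = (a : ℤ) := by
  simp [V]

lemma V_cons (p a c : ℕ) (L₂ : List ℕ) (ε : Fin (L₂.length + 1) → Bool) :
    V p (a :: c :: L₂) ε =
      (p : ℤ) * V p (c :: L₂) (fun i => ε i.succ) + (if ε 0 then (1:ℤ) else -1) * (a : ℤ) := by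
  have h1 : V p (a :: c :: L₂) ε =
      (((c :: L₂).getD L₂.length 0 : ℕ) : ℤ) * (p:ℤ) ^ (L₂.length + 1) +
      ∑ i : Fin (L₂.length + 1),
        (if ε i then (1:ℤ) else -1) * (((a :: c :: L₂).getD (i : ℕ) 0 : ℕ) : ℤ) * (p:ℤ) ^ (i : ℕ) := rfl
  have h2 : V p (c :: L₂) (fun i => ε i.succ) =
      (((c :: L₂).getD L₂.length 0 : ℕ) : ℤ) * (p:ℤ) ^ (L₂.length) +
      ∑ i : Fin (L₂.length),
        (if ε i.succ then (1:ℤ) else -1) * (((c :: L₂).getD (i : ℕ) 0 : ℕ) : ℤ) * (p:ℤ) ^ (i : ℕ) := rfl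
  rw [h1, h2, Fin.sum_univ_succ]
  simp only [List.getD_cons_succ, List.getD_cons_zero, Fin.val_succ, Fin.val_zero, pow_zero]
  rw [mul_add, Finset.mul_sum]
  have h3 : ∀ i : Fin (L₂.length),
      (p:ℤ) * ((if ε i.succ then (1:ℤ) else -1) * (((c :: L₂).getD (i : ℕ) 0 : ℕ) : ℤ) * (p:ℤ) ^ (i:ℕ))
      = (if ε i.succ then (1:ℤ) else -1) * (((c :: L₂).getD (i : ℕ) 0 : ℕ) : ℤ) * (p:ℤ) ^ ((i:ℕ) + 1) := by
    intro i; ring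
  rw [Finset.sum_congr rfl (fun i _ => h3 i)]
  ring
lemma V_mem (p : ℕ) : ∀ (L : List ℕ), L ≠ [] → ∀ x : ℤ,
    (x ∈ M p L ↔ ∃ ε : Fin (L.length - 1) → Bool, V p L ε = x) := by
  intro L
  induction L with
  | nil => intro h; exact absurd rfl h
  | cons a L ih =>
    intro _ x
    cases L with
    | nil =>
      simp only [M_single, Multiset.mem_singleton]
      constructor
      · rintro rfl; exact ⟨fun _ => true, V_single p a _⟩
      · rintro ⟨ε, rfl⟩; exact (V_single p a ε)
    | cons c L₂ =>
      rw [M_cons p a (by simp)]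
      have ihc := ih (by simp)
      show _ ↔ ∃ ε : Fin (L₂.length + 1) → Bool, V p (a :: c :: L₂) ε = x
      constructor
      · intro hx
        split_ifs at hx with ha
        · rw [Multiset.mem_map] at hx
          obtain ⟨z, hz, rfl⟩ := hx
          obtain ⟨ε', hε'⟩ := (ihc z).mp hz
          refine ⟨Fin.cons true ε', ?_⟩
          rw [V_cons]
          have he : (fun i => (Fin.cons true ε' : Fin (L₂.length+1) → Bool) i.succ) = ε' :=
            funext (fun i => Fin.cons_succ _ _ i)
          rw [he, hε']
          subst ha
          simp
        · rw [Multiset.mem_bind] at hx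
          obtain ⟨z, hz, hx⟩ := hx
          obtain ⟨ε', hε'⟩ := (ihc z).mp hz
          simp only [Multiset.insert_eq_cons, Multiset.mem_cons, Multiset.mem_singleton] at hx
          rcases hx with rfl | rfl
          · refine ⟨Fin.cons false ε', ?_⟩
            rw [V_cons]
            have he : (fun i => (Fin.cons false ε' : Fin (L₂.length+1) → Bool) i.succ) = ε' :=
              funext (fun i => Fin.cons_succ _ _ i)
            rw [he, hε']
            simp; ring
          · refine ⟨Fin.cons true ε', ?_⟩
            rw [V_cons]
            have he : (fun i => (Fin.cons true ε' : Fin (L₂.length+1) → Bool) i.succ) = ε' :=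
              funext (fun i => Fin.cons_succ _ _ i)
            rw [he, hε']
            simp
      · rintro ⟨ε, rfl⟩
        rw [V_cons]
        have hz : V p (c :: L₂) (fun i => ε i.succ) ∈ M p (c :: L₂) := (ihc _).mpr ⟨_, rfl⟩
        by_cases ha : a = 0
        · subst ha
          rw [if_pos rfl, Multiset.mem_map]
          refine ⟨_, hz, ?_⟩
          cases hE : ε 0 <;> simp [hE]
        · rw [if_neg ha, Multiset.mem_bind]
          refine ⟨_, hz, ?_⟩
          simp only [Multiset.insert_eq_cons, Multiset.mem_cons, Multiset.mem_singleton]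
          cases hE : ε 0
          · left; simp only [hE, Bool.false_eq_true, if_false]; ring
          · right; simp only [hE, if_true]; ring

end ExtAux

lemma ExtAux.suppP_val (p : ℕ) (hp : p.Prime) (hp2 : 2 < p) (t : ℤ) (ht : -1 ≤ t) :
    (suppP p t).val = ExtAux.TM p (t + 1).toNat := by
  rcases eq_or_lt_of_le ht with h | h
  · rw [suppP, if_neg (by omega), ← h]
    simp
  · have ht0 : 0 ≤ t := by omega
    have hm : (t + 1).toNat = t.toNat + 1 := by omega
    rw [hm]
    have hne : Nat.digits p (t.toNat + 1) ≠ [] := Nat.digits_ne_nil_iff_ne_zero.mpr (by omega)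
    have hfin : suppP p t = (ExtAux.TM p (t.toNat + 1)).toFinset := by
      apply Finset.ext
      intro x
      simp only [suppP, if_pos ht0, Finset.mem_image, Finset.mem_univ, true_and,
        Multiset.mem_toFinset]
      exact (ExtAux.V_mem p _ hne x).symm
    rw [hfin, Multiset.toFinset_val, Multiset.Nodup.dedup (ExtAux.TM_nodup p hp hp2 _)]

namespace ExtAux

lemma map_filter_eq_bind (s : Multiset ℤ) (pr : ℤ → Prop) [DecidablePred pr] (f : ℤ → ℤ) :
    (s.filter pr).map f = s.bind (fun a => if pr a then {f a} else 0) := by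
  induction s using Multiset.induction_on with
  | empty => simp
  | cons a s ih =>
    rw [Multiset.filter_cons, Multiset.cons_bind, Multiset.map_add, ih]
    congr 1
    split_ifs <;> simp

lemma EM_bind (p m : ℕ) :
    EM p m = (TM p m).bind (fun x => {x + 1} + if 2 ≤ x then {x - 1} else 0) := by
  rw [EM, map_filter_eq_bind, ← Multiset.bind_singleton (TM p m) (fun x => x + 1),
    ← Multiset.bind_add]

lemma lemB (p q : ℕ) (hp : p.Prime) (hp2 : 2 < p) (hq : 1 ≤ q) :
    EM p ((p-1) + p*q) = TM p ((p-2) + p*q) + (EM p q).map (fun z => (p:ℤ) * z) := by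
  have hA : (((p-1:ℕ)):ℤ) = (p:ℤ) - 1 := by
    rw [Nat.cast_sub (by omega : 1 ≤ p)]; norm_num
  have hB : (((p-2:ℕ)):ℤ) = (p:ℤ) - 2 := by
    rw [Nat.cast_sub (by omega : 2 ≤ p)]; norm_num
  have hP : (3:ℤ) ≤ (p:ℤ) := by exact_mod_cast hp2
  rw [EM_bind, EM_bind,
      TM_rec p (p-1) q hp.one_lt (by omega) (by omega), if_neg (by omega),
      TM_rec p (p-2) q hp.one_lt (by omega) (by omega), if_neg (by omega),
      Multiset.bind_assoc, Multiset.map_bind, ← Multiset.bind_add]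
  apply Multiset.bind_congr
  intro z hz
  have hz1 : 1 ≤ z := TM_pos p (by omega) q z hz
  simp only [Multiset.insert_eq_cons, Multiset.cons_bind, Multiset.singleton_bind, hA, hB]
  have c1 : (2 ≤ (p:ℤ) * z - ((p:ℤ) - 1)) ↔ 2 ≤ z := by
    constructor <;> intro h <;> nlinarith
  have c2 : (2 ≤ (p:ℤ) * z + ((p:ℤ) - 1)) := by nlinarith
  rw [if_pos c2]
  simp only [c1, Multiset.map_add, Multiset.map_singleton]
  rw [show (p:ℤ)*z - ((p:ℤ)-1) + 1 = (p:ℤ)*z - ((p:ℤ)-2) from by ring,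
      show (p:ℤ)*z - ((p:ℤ)-1) - 1 = (p:ℤ)*(z-1) from by ring,
      show (p:ℤ)*z + ((p:ℤ)-1) + 1 = (p:ℤ)*(z+1) from by ring,
      show (p:ℤ)*z + ((p:ℤ)-1) - 1 = (p:ℤ)*z + ((p:ℤ)-2) from by ring]
  by_cases h2 : 2 ≤ z
  · simp only [if_pos h2, Multiset.map_singleton, ← Multiset.singleton_add]
    abel
  · simp only [if_neg h2, Multiset.map_zero, add_zero, ← Multiset.singleton_add]
    abel

end ExtAux

namespace ExtAux

lemma lemA (p q : ℕ) (hp : p.Prime) (hp2 : 2 < p) (hq : 1 ≤ q) (hb : q % p ≠ p - 1) :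
    EM p q = TM p (q+1) +
      (if q % p = 0 then 0
       else if q % p = 1 then TM p (q-1) + TM p (q-1)
       else TM p (q-1)) := by
  have hP : (3:ℤ) ≤ (p:ℤ) := by exact_mod_cast hp2
  rcases lt_or_ge q p with hqp | hqp
  · -- q < p, so q % p = q
    have hqm : q % p = q := Nat.mod_eq_of_lt hqp
    rw [hqm] at hb ⊢
    rcases eq_or_lt_of_le hq with h1 | h2
    · -- q = 1
      rw [← h1]
      rw [EM_bind, TM_lt p 1 hp.one_lt one_pos (by omega), Multiset.singleton_bind,
        if_neg one_ne_zero, if_pos rfl, TM_lt p 2 hp.one_lt (by omega) (by omega)]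
      norm_num
    · -- 2 ≤ q
      have h2' : 2 ≤ q := h2
      rw [EM_bind, TM_lt p q hp.one_lt (by omega) hqp, Multiset.singleton_bind,
        if_pos (by exact_mod_cast h2' : (2:ℤ) ≤ (q:ℤ)),
        if_neg (by omega : ¬ q = 0), if_neg (by omega : ¬ q = 1),
        TM_lt p (q+1) hp.one_lt (by omega) (by omega),
        TM_lt p (q-1) hp.one_lt (by omega) (by omega),
        Nat.cast_add, Nat.cast_sub (by omega : 1 ≤ q)]
      norm_num
  · -- q ≥ p
    obtain ⟨b, hbdef⟩ : ∃ b, q % p = b := ⟨_, rfl⟩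
    obtain ⟨r, hrdef⟩ : ∃ r, q / p = r := ⟨_, rfl⟩
    have hkey : b + p * r = q := by rw [← hbdef, ← hrdef]; exact Nat.mod_add_div q p
    have hbp : b < p := by rw [← hbdef]; exact Nat.mod_lt _ (by omega)
    have hr : 1 ≤ r := by
      rw [← hrdef]; exact (Nat.one_le_div_iff (by omega)).mpr hqp
    rw [hbdef] at hb ⊢
    have hb1 : b + 1 < p := by omega
    have hTMq : TM p q =
        if b = 0 then (TM p r).map (fun z => (p:ℤ) * z)
        else (TM p r).bind (fun z => {(p:ℤ)*z - (b:ℤ), (p:ℤ)*z + (b:ℤ)}) := by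
      rw [← hkey]; exact TM_rec p b r hp.one_lt (by omega) hbp
    have hTMq1 : TM p (q+1) =
        (TM p r).bind (fun z => {(p:ℤ)*z - ((b+1:ℕ):ℤ), (p:ℤ)*z + ((b+1:ℕ):ℤ)}) := by
      rw [show q + 1 = (b+1) + p * r from by omega,
        TM_rec p (b+1) r hp.one_lt (by omega) hb1, if_neg (by omega)]
    rcases Nat.lt_or_ge b 2 with hblt | hbge
    · interval_cases b
      · -- b = 0
        rw [EM_bind, hTMq, if_pos rfl, if_pos rfl, add_zero, hTMq1, Multiset.bind_map]
        apply Multiset.bind_congr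
        intro z hz
        have hz1 : 1 ≤ z := TM_pos p (by omega) r z hz
        rw [if_pos (by nlinarith : (2:ℤ) ≤ (p:ℤ)*z)]
        simp only [Multiset.insert_eq_cons, ← Multiset.singleton_add, Nat.cast_one,
          Nat.zero_add]
        abel
      · -- b = 1
        rw [EM_bind, hTMq, if_neg one_ne_zero, if_neg one_ne_zero, if_pos rfl, hTMq1]
        have hqm1 : q - 1 = p * r := by omega
        rw [hqm1, TM_mul p r hp.one_lt,
          Multiset.bind_assoc, ← Multiset.bind_singleton (TM p r) (fun z => (p:ℤ)*z),
          ← Multiset.bind_add, ← Multiset.bind_add]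
        apply Multiset.bind_congr
        intro z hz
        have hz1 : 1 ≤ z := TM_pos p (by omega) r z hz
        simp only [Multiset.insert_eq_cons, Multiset.cons_bind, Multiset.singleton_bind,
          Nat.cast_one]
        rw [if_pos (by nlinarith : (2:ℤ) ≤ (p:ℤ)*z - 1),
          if_pos (by nlinarith : (2:ℤ) ≤ (p:ℤ)*z + 1)]
        simp only [Multiset.insert_eq_cons, ← Multiset.singleton_add]
        rw [show (p:ℤ)*z - 1 + 1 = (p:ℤ)*z from by ring,
          show (p:ℤ)*z + 1 - 1 = (p:ℤ)*z from by ring,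
          show (p:ℤ)*z - 1 - 1 = (p:ℤ)*z - ((1+1:ℕ):ℤ) from by push_cast; ring,
          show (p:ℤ)*z + 1 + 1 = (p:ℤ)*z + ((1+1:ℕ):ℤ) from by push_cast; ring]
        abel
    · -- 2 ≤ b ≤ p - 2
      rw [EM_bind, hTMq, if_neg (by omega), if_neg (by omega), if_neg (by omega), hTMq1]
      have hqm1 : q - 1 = (b-1) + p * r := by omega
      rw [hqm1, TM_rec p (b-1) r hp.one_lt (by omega) (by omega), if_neg (by omega),
        Multiset.bind_assoc, ← Multiset.bind_add]
      apply Multiset.bind_congr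
      intro z hz
      have hz1 : 1 ≤ z := TM_pos p (by omega) r z hz
      have hbI : (2:ℤ) ≤ (b:ℤ) := by exact_mod_cast hbge
      have hbI2 : (b:ℤ) + 2 ≤ (p:ℤ) := by exact_mod_cast (by omega : b + 2 ≤ p)
      simp only [Multiset.insert_eq_cons, Multiset.cons_bind, Multiset.singleton_bind]
      rw [if_pos (by nlinarith : (2:ℤ) ≤ (p:ℤ)*z - (b:ℤ)),
        if_pos (by nlinarith : (2:ℤ) ≤ (p:ℤ)*z + (b:ℤ))]
      simp only [← Multiset.singleton_add]
      rw [show (p:ℤ)*z - (b:ℤ) + 1 = (p:ℤ)*z - ((b-1:ℕ):ℤ) from by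
            rw [Nat.cast_sub (by omega : 1 ≤ b)]; ring,
        show (p:ℤ)*z + (b:ℤ) - 1 = (p:ℤ)*z + ((b-1:ℕ):ℤ) from by
            rw [Nat.cast_sub (by omega : 1 ≤ b)]; ring,
        show (p:ℤ)*z - (b:ℤ) - 1 = (p:ℤ)*z - ((b+1:ℕ):ℤ) from by push_cast; ring,
        show (p:ℤ)*z + (b:ℤ) + 1 = (p:ℤ)*z + ((b+1:ℕ):ℤ) from by push_cast; ring]
      abel

end ExtAux

namespace ExtAux

def Epart (p k d : ℕ) : Multiset ℤ :=
  if k = 1 then 0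
  else if k < p then TM p (p^(d+1)*k - 2*p^(d+1))
  else if (k-1) % p = 0 then 0
  else if (k-1) % p = 1 then
    TM p (p^(d+1)*k - 2*p^(d+1)) + TM p (p^(d+1)*k - 2*p^(d+1))
  else TM p (p^(d+1)*k - 2*p^(d+1))

lemma map_finsum (f : ℤ → ℤ) (s : Finset ℕ) (g : ℕ → Multiset ℤ) :
    (∑ i ∈ s, g i).map f = ∑ i ∈ s, (g i).map f :=
  map_sum (Multiset.mapAddMonoidHom f) g s

lemma Epart_map (p k d : ℕ) (hp : 1 < p) (hk1 : 1 ≤ k) :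
    (Epart p k d).map (fun z => (p:ℤ) * z) = Epart p k (d+1) := by
  have hmul : p * (p^(d+1)*k - 2*p^(d+1)) = p^(d+1+1)*k - 2*p^(d+1+1) := by
    have h1 : p * (p^(d+1)*k - 2*p^(d+1)) = p*(p^(d+1)*k) - p*(2*p^(d+1)) :=
      Nat.mul_sub _ _ _
    have h2 : p*(p^(d+1)*k) = p^(d+1+1)*k := by ring
    have h3 : p*(2*p^(d+1)) = 2*p^(d+1+1) := by ring
    omega
  unfold Epart
  split_ifs <;>
    simp only [Multiset.map_zero, Multiset.map_add, ← TM_mul p _ hp, hmul]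

lemma dvd_of_mod_eq (p k : ℕ) (hp : 1 ≤ p) (hk1 : 1 ≤ k) (h : (k-1) % p = p - 1) :
    p ∣ k := by
  have h2 := Nat.div_add_mod (k-1) p
  refine ⟨(k-1)/p + 1, ?_⟩
  have h3 : p * ((k-1)/p + 1) = p * ((k-1)/p) + p := by ring
  omega

lemma mainlem (p : ℕ) (hp : p.Prime) (hp2 : 2 < p) (k : ℕ) (hk : ¬ p ∣ k) (hk1 : 1 ≤ k) :
    ∀ d, EM p (p^(d+1)*k - 1) =
      TM p (p^(d+1)*k) + TM p (p^(d+1)*k - 2) +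
      (∑ i ∈ Finset.Icc 1 d, TM p (p^(d+1)*k - 2*p^i)) + Epart p k d := by
  have hP : (3:ℤ) ≤ (p:ℤ) := by exact_mod_cast hp2
  have hmod : (k-1) % p ≠ p - 1 := fun h => hk (dvd_of_mod_eq p k (by omega) hk1 h)
  have hA : (((p-1:ℕ)):ℤ) = (p:ℤ) - 1 := by
    rw [Nat.cast_sub (by omega : 1 ≤ p)]; norm_num
  have hB : (((p-2:ℕ)):ℤ) = (p:ℤ) - 2 := by
    rw [Nat.cast_sub (by omega : 2 ≤ p)]; norm_num
  intro d
  induction d with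
  | zero =>
    rw [Finset.Icc_eq_empty (by omega : ¬ (1:ℕ) ≤ 0), Finset.sum_empty]
    simp only [zero_add, pow_one]
    rcases eq_or_lt_of_le hk1 with h1 | hk2
    · -- k = 1
      rw [← h1, mul_one]
      unfold Epart
      rw [if_pos rfl]
      have hTMp : TM p p = {(p:ℤ)} := by
        have h := TM_mul p 1 hp.one_lt
        rw [mul_one] at h
        rw [h, TM_lt p 1 hp.one_lt one_pos (by omega)]
        simp
      rw [EM_bind, TM_lt p (p-1) hp.one_lt (by omega) (by omega), Multiset.singleton_bind,
        hTMp, TM_lt p (p-2) hp.one_lt (by omega) (by omega), hA, hB,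
        if_pos (by linarith : (2:ℤ) ≤ (p:ℤ) - 1),
        show (p:ℤ) - 1 + 1 = (p:ℤ) from by ring,
        show (p:ℤ) - 1 - 1 = (p:ℤ) - 2 from by ring]
      abel
    · -- 2 ≤ k
      have hk2' : 2 ≤ k := hk2
      have hpk : p ≤ p * k := by
        calc p = p * 1 := (mul_one p).symm
        _ ≤ p * k := Nat.mul_le_mul_left p hk1
      have e1 : p * (k-1) = p*k - p := by rw [Nat.mul_sub, mul_one]
      have e2 : p * (k-2) = p*k - 2*p := by
        have h1 : p*(k-2) = p*k - p*2 := Nat.mul_sub _ _ _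
        have h2 : p*2 = 2*p := by ring
        omega
      have key : p*k - 1 = (p-1) + p*(k-1) := by omega
      have key2 : (p-2) + p*(k-1) = p*k - 2 := by omega
      rw [key, lemB p (k-1) hp hp2 (by omega), key2,
        lemA p (k-1) hp hp2 (by omega) hmod,
        show (k-1)+1 = k from by omega, Multiset.map_add, ← TM_mul p k hp.one_lt]
      have hF : Multiset.map (fun z => (p:ℤ)*z)
          (if (k-1) % p = 0 then 0
           else if (k-1) % p = 1 then TM p (k-1-1) + TM p (k-1-1)
           else TM p (k-1-1)) = Epart p k 0 := by
        rw [show k-1-1 = k-2 from by omega]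
        unfold Epart
        simp only [zero_add, pow_one]
        by_cases hkp : k < p
        · have hmlt : (k-1) % p = k - 1 := Nat.mod_eq_of_lt (by omega)
          rw [if_neg (by omega : ¬ k = 1), if_pos hkp, hmlt]
          by_cases h3 : k = 2
          · subst h3
            rw [if_neg (by omega), if_pos (by omega),
              show (2:ℕ) - 2 = 0 from rfl, show p*2 - 2*p = 0 from by omega]
            simp
          · rw [if_neg (by omega), if_neg (by omega), ← TM_mul p (k-2) hp.one_lt, e2]
        · rw [if_neg (by omega : ¬ k = 1), if_neg hkp]
          split_ifs <;>
            simp only [Multiset.map_zero, Multiset.map_add, ← TM_mul p _ hp.one_lt, e2]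
      rw [hF]
      abel
  | succ d ih =>
    have hppow : p ≤ p^(d+1) := by
      calc p = p^1 := (pow_one p).symm
      _ ≤ p^(d+1) := Nat.pow_le_pow_right (by omega) (by omega)
    have hMp : p ≤ p^(d+1)*k := by
      calc p ≤ p^(d+1) := hppow
      _ = p^(d+1) * 1 := (mul_one _).symm
      _ ≤ p^(d+1)*k := Nat.mul_le_mul_left _ hk1
    have e1 : p*(p^(d+1)*k - 1) = p^(d+1+1)*k - p := by
      have h1 : p*(p^(d+1)*k - 1) = p*(p^(d+1)*k) - p*1 := Nat.mul_sub _ _ _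
      have h2 : p*(p^(d+1)*k) = p^(d+1+1)*k := by ring
      omega
    have hMp2 : p ≤ p^(d+1+1)*k := by
      have h2 : p*(p^(d+1)*k) = p^(d+1+1)*k := by ring
      nlinarith
    have key : p^(d+1+1)*k - 1 = (p-1) + p*(p^(d+1)*k - 1) := by omega
    have key2 : (p-2) + p*(p^(d+1)*k - 1) = p^(d+1+1)*k - 2 := by omega
    have e3 : p*(p^(d+1)*k - 2) = p^(d+1+1)*k - 2*p^1 := by
      have h1 : p*(p^(d+1)*k - 2) = p*(p^(d+1)*k) - p*2 := Nat.mul_sub _ _ _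
      have h2 : p*(p^(d+1)*k) = p^(d+1+1)*k := by ring
      have h3 : p*2 = 2*p^1 := by ring
      omega
    rw [key, lemB p (p^(d+1)*k - 1) hp hp2 (by omega), key2, ih,
      Multiset.map_add, Multiset.map_add, Multiset.map_add,
      map_finsum, Epart_map p k d hp.one_lt hk1]
    simp only [← TM_mul p _ hp.one_lt]
    rw [show p*(p^(d+1)*k) = p^(d+1+1)*k from by ring, e3]
    have hsum : ∑ i ∈ Finset.Icc 1 d, TM p (p*(p^(d+1)*k - 2*p^i)) =
        ∑ i ∈ Finset.Icc 1 d, TM p (p^(d+1+1)*k - 2*p^(i+1)) := by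
      refine Finset.sum_congr rfl (fun i hi => ?_)
      congr 1
      have h1 : p*(p^(d+1)*k - 2*p^i) = p*(p^(d+1)*k) - p*(2*p^i) := Nat.mul_sub _ _ _
      have h2 : p*(p^(d+1)*k) = p^(d+1+1)*k := by ring
      have h3 : p*(2*p^i) = 2*p^(i+1) := by ring
      omega
    rw [hsum]
    have hshift : ∑ i ∈ Finset.Icc 1 d, TM p (p^(d+1+1)*k - 2*p^(i+1)) =
        ∑ i ∈ Finset.Icc 2 (d+1), TM p (p^(d+1+1)*k - 2*p^i) := by
      rw [show (2:ℕ) = 1 + 1 from rfl, ← Finset.map_add_right_Icc 1 d 1, Finset.sum_map]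
      simp only [addRightEmbedding_apply]
    have hins : Finset.Icc 1 (d+1) = insert 1 (Finset.Icc 2 (d+1)) := by
      ext x
      simp only [Finset.mem_Icc, Finset.mem_insert]
      omega
    rw [hshift, hins, Finset.sum_insert (by simp), pow_one]
    abel

end ExtAux


/-- The case `a₀ = p-1` of the decomposition of `ext(n)`.  Here `d` is the
largest integer with `p^(d+1) ∣ n+2`, and the extra term `E` depends on the
digit `a_{d+1} = ⌊(n+1)/p^(d+1)⌋ mod p` of `n+1` when `n+2 ≥ p^(d+2)`. -/
theorem ext_eq_of_last_digit (p : ℕ) (hp : p.Prime) (hp2 : 2 < p) (n : ℤ) (hn : 1 ≤ n)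
    (hmod : (n + 1) % (p : ℤ) = (p : ℤ) - 1) (d : ℕ)
    (hd1 : (p : ℤ) ^ (d + 1) ∣ n + 2) (hd2 : ¬ (p : ℤ) ^ (d + 2) ∣ n + 2) :
    extP p n =
      (suppP p (n + 1)).val + (suppP p (n - 1)).val +
        (∑ i ∈ Finset.Icc 1 d, (suppP p (n + 1 - 2 * (p : ℤ) ^ i)).val) +
        (if n + 2 = (p : ℤ) ^ (d + 1) then 0
         else if n + 2 < (p : ℤ) ^ (d + 2) then
           (suppP p (n + 1 - 2 * (p : ℤ) ^ (d + 1))).val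
         else
           if ((n + 1) / (p : ℤ) ^ (d + 1)) % (p : ℤ) = 0 then 0
           else if ((n + 1) / (p : ℤ) ^ (d + 1)) % (p : ℤ) = 1 then
             (suppP p (n + 1 - 2 * (p : ℤ) ^ (d + 1))).val +
               (suppP p (n + 1 - 2 * (p : ℤ) ^ (d + 1))).val
           else (suppP p (n + 1 - 2 * (p : ℤ) ^ (d + 1))).val) := by

  classical
  open ExtAux in
  have hP : (3:ℤ) ≤ (p:ℤ) := by exact_mod_cast hp2
  set m : ℕ := (n+2).toNat with hmdef
  have hm : (m:ℤ) = n + 2 := Int.toNat_of_nonneg (by omega)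
  have hcast1 : ((p:ℤ))^(d+1) = ((p^(d+1):ℕ):ℤ) := by push_cast; ring
  have hcast2 : ((p:ℤ))^(d+2) = ((p^(d+2):ℕ):ℤ) := by push_cast; ring
  have hdvd : p^(d+1) ∣ m := by
    have h : ((p:ℤ))^(d+1) ∣ (m:ℤ) := by rw [hm]; exact hd1
    rwa [hcast1, Int.natCast_dvd_natCast] at h
  obtain ⟨k, hk⟩ := hdvd
  have hpowpos : 0 < p^(d+1) := Nat.pow_pos (by omega)
  have hm3 : 3 ≤ m := by omega
  have hk1 : 1 ≤ k := by
    rcases Nat.eq_zero_or_pos k with rfl | h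
    · omega
    · exact h
  have hpk : ¬ p ∣ k := by
    rintro ⟨t, rfl⟩
    apply hd2
    refine ⟨(t:ℤ), ?_⟩
    rw [← hm, hk]
    push_cast
    ring
  have hppow : p ≤ p^(d+1) := by
    calc p = p^1 := (pow_one p).symm
    _ ≤ p^(d+1) := Nat.pow_le_pow_right (by omega) (by omega)
  have hMpow : p^(d+1) ≤ m := by
    calc p^(d+1) = p^(d+1) * 1 := (mul_one _).symm
    _ ≤ p^(d+1) * k := Nat.mul_le_mul_left _ hk1
    _ = m := hk.symm
  -- left-hand side
  have hsupp_n : (suppP p n).val = ExtAux.TM p (m-1) := by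
    rw [ExtAux.suppP_val p hp hp2 n (by omega)]
    congr 1
    omega
  have hext : extP p n = ExtAux.EM p (m-1) := by
    rw [extP, ExtAux.EM, hsupp_n]
  -- conditions
  have hc1 : (n + 2 = (p:ℤ)^(d+1)) ↔ k = 1 := by
    rw [← hm, hcast1, Int.natCast_inj]
    constructor
    · intro h
      have h2 : p^(d+1) * k = p^(d+1) * 1 := by omega
      exact Nat.eq_of_mul_eq_mul_left hpowpos h2
    · rintro rfl
      omega
  have hc2 : (n + 2 < (p:ℤ)^(d+2)) ↔ k < p := by
    rw [← hm, hcast2, Nat.cast_lt]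
    have he : p^(d+1)*p = p^(d+2) := by ring
    constructor
    · intro h
      refine Nat.lt_of_mul_lt_mul_left (a := p^(d+1)) ?_
      omega
    · intro h
      have := Nat.mul_le_mul_left (p^(d+1)) (by omega : k + 1 ≤ p)
      have h3 : p^(d+1)*(k+1) = p^(d+1)*k + p^(d+1) := by ring
      omega
  have hm' : ((p^(d+1):ℕ):ℤ) * (k:ℤ) = n + 2 := by
    rw [← hm, hk]; push_cast; ring
  have hP0 : (1:ℤ) ≤ ((p^(d+1):ℕ):ℤ) := by exact_mod_cast hpowpos
  have hdivmod : ((n+1) / (p:ℤ)^(d+1)) % (p:ℤ) = (((k-1) % p : ℕ) : ℤ) := by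
    have h1 : n + 1 = ((p^(d+1):ℕ):ℤ) - 1 + ((p^(d+1):ℕ):ℤ) * ((k:ℤ) - 1) := by
      linear_combination -hm'
    have hdiv : (n+1) / (p:ℤ)^(d+1) = (k:ℤ) - 1 := by
      rw [hcast1, h1, Int.add_mul_ediv_left _ _ (by omega : ((p^(d+1):ℕ):ℤ) ≠ 0),
        Int.ediv_eq_zero_of_lt (by omega) (by omega), zero_add]
    rw [hdiv, show (k:ℤ) - 1 = ((k-1:ℕ):ℤ) from by rw [Nat.cast_sub hk1]; norm_num]
    push_cast
    ring
  -- E argument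
  have hEarg : 2 ≤ k → (suppP p (n + 1 - 2*(p:ℤ)^(d+1))).val = ExtAux.TM p (m - 2*p^(d+1)) := by
    intro hk2
    have hple : 2*p^(d+1) ≤ m := by
      have := Nat.mul_le_mul_left (p^(d+1)) hk2
      have h3 : p^(d+1)*2 = 2*p^(d+1) := by ring
      omega
    rw [hcast1, ExtAux.suppP_val p hp hp2 _ (by omega)]
    congr 1
    omega
  -- sum
  have hsum : ∑ i ∈ Finset.Icc 1 d, (suppP p (n + 1 - 2 * (p:ℤ)^i)).val
      = ∑ i ∈ Finset.Icc 1 d, ExtAux.TM p (m - 2*p^i) := by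
    refine Finset.sum_congr rfl (fun i hi => ?_)
    rw [Finset.mem_Icc] at hi
    have hpow : p^(i+1) ≤ p^(d+1) := Nat.pow_le_pow_right (by omega) (by omega)
    have h3 : 1 ≤ p^i := Nat.one_le_pow _ _ (by omega)
    have h4 : p * p^i = p^(i+1) := by ring
    have hple : 2*p^i + 1 ≤ m := by nlinarith
    have hcast : ((p:ℤ))^i = ((p^i : ℕ):ℤ) := by push_cast; ring
    rw [hcast, ExtAux.suppP_val p hp hp2 _ (by omega)]
    congr 1
    omega
  -- assemble
  rw [hext, ExtAux.suppP_val p hp hp2 (n+1) (by omega),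
    show ((n+1)+1).toNat = m from by omega,
    ExtAux.suppP_val p hp hp2 (n-1) (by omega),
    show ((n-1)+1).toNat = m - 2 from by omega,
    hsum, show m - 1 = p^(d+1)*k - 1 from by rw [hk],
    ExtAux.mainlem p hp hp2 k hpk hk1 d]
  simp only [ExtAux.Epart, ← hk, hdivmod, Nat.cast_eq_zero, Nat.cast_eq_one]
  by_cases h1 : k = 1
  · rw [if_pos h1, if_pos (hc1.mpr h1)]
  rw [if_neg h1, if_neg (fun h => h1 (hc1.mp h))]
  by_cases h2 : k < p
  · rw [if_pos h2, if_pos (hc2.mpr h2), hEarg (by omega)]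
  rw [if_neg h2, if_neg (fun h => h2 (hc2.mp h))]
  by_cases h3 : (k-1) % p = 0
  · rw [if_pos h3, if_pos h3]
  rw [if_neg h3, if_neg h3]
  by_cases h4 : (k-1) % p = 1
  · rw [if_pos h4, if_pos h4, hEarg (by omega)]
  · rw [if_neg h4, if_neg h4, hEarg (by omega)]
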